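/- Let M > 0, L ∈ ℕ with L > 2eM, and let V and V' be random variables taking values in [0,M] such that E[V^j] = E[V'^j] for j = 1,...,L. Then TV(E[Poi(V)], E[Poi(V')]) ≤ (2eM/L)^L. -/

import Mathlib

open scoped BigOperators
open Real MeasureTheory

noncomputable section

/-- The Poisson probability mass function with mean `t`. -/
def poissonPMF (t : ℝ) (m : ℕ) : ℝ := Real.exp (-t) * t ^ m / (m.factorial : ℝ)

/-- Total variation distance between two probability mass functions on `ℕ`:
`TV(P,Q) = sup_A |P(A) − Q(A)|`. -/
def TVpmf (p q : ℕ → ℝ) : ℝ :=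
  ⨆ A : Set ℕ, |(∑' j : A, p ↑j) - (∑' j : A, q ↑j)|

open scoped Nat

lemma real_exp_eq_tsum (y : ℝ) : Real.exp y = ∑' n : ℕ, y ^ n / (n ! : ℝ) := by
  rw [Real.exp_eq_exp_ℝ, NormedSpace.exp_eq_tsum_div]

lemma antidiag_factorial_sum (M : ℝ) (n : ℕ) :
    ∑ p ∈ Finset.HasAntidiagonal.antidiagonal n, M ^ n / ((p.1)! * (p.2)! : ℝ) = (2 * M) ^ n / (n ! : ℝ) := by
  rw [Finset.Nat.sum_antidiagonal_eq_sum_range_succ_mk]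
  have h : ∀ i ∈ Finset.range (n + 1),
      M ^ n / ((i)! * ((n - i))! : ℝ) = (n.choose i : ℝ) * (M ^ n / (n ! : ℝ)) := by
    intro i hi
    have hin : i ≤ n := Nat.lt_succ_iff.mp (Finset.mem_range.mp hi)
    have key := Nat.choose_mul_factorial_mul_factorial hin
    have keyR : (n.choose i : ℝ) * (i)! * ((n - i)! : ℝ) = (n ! : ℝ) := by
      exact_mod_cast congrArg (Nat.cast : ℕ → ℝ) key
    have h1 : ((i)! : ℝ) ≠ 0 := Nat.cast_ne_zero.mpr (Nat.factorial_ne_zero i)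
    have h2 : (((n - i))! : ℝ) ≠ 0 := Nat.cast_ne_zero.mpr (Nat.factorial_ne_zero _)
    have h3 : ((n)! : ℝ) ≠ 0 := Nat.cast_ne_zero.mpr (Nat.factorial_ne_zero n)
    have hc : (n.choose i : ℝ) ≠ 0 := Nat.cast_ne_zero.mpr (Nat.choose_pos hin).ne'
    rw [← keyR]
    field_simp
  rw [Finset.sum_congr rfl h, ← Finset.sum_mul]
  have : (∑ i ∈ Finset.range (n + 1), (n.choose i : ℝ)) = 2 ^ n := by
    exact_mod_cast congrArg (Nat.cast : ℕ → ℝ) (Nat.sum_range_choose n)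
  rw [this, mul_pow]
  ring

lemma poissonPMF_nonneg {x : ℝ} (hx : 0 ≤ x) (j : ℕ) : 0 ≤ poissonPMF x j := by
  unfold poissonPMF
  positivity

lemma poissonPMF_le {x M : ℝ} (hx : x ∈ Set.Icc 0 M) (j : ℕ) :
    poissonPMF x j ≤ M ^ j / (j ! : ℝ) := by
  unfold poissonPMF
  have h1 : Real.exp (-x) ≤ 1 := by
    calc Real.exp (-x) ≤ Real.exp 0 := Real.exp_le_exp.mpr (by linarith [hx.1])
    _ = 1 := Real.exp_zero
  have h2 : x ^ j ≤ M ^ j := pow_le_pow_left₀ hx.1 hx.2 j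
  have h3 : (0:ℝ) < (j ! : ℝ) := by positivity
  rw [div_le_div_iff₀ h3 h3]
  have hxp : (0:ℝ) ≤ x ^ j := pow_nonneg hx.1 j
  have h4 : Real.exp (-x) * x ^ j ≤ M ^ j :=
    le_trans (by nlinarith : Real.exp (-x) * x ^ j ≤ x ^ j) h2
  exact mul_le_mul_of_nonneg_right h4 h3.le

section MeasAux

variable {M : ℝ} {μ : Measure ℝ} [IsProbabilityMeasure μ]

lemma aux_int_pow (hμ : ∀ᵐ x ∂μ, x ∈ Set.Icc 0 M) (n : ℕ) :
    Integrable (fun x => x ^ n) μ := by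
  refine (integrable_const (M ^ n)).mono' ?_ ?_
  · exact (measurable_id.pow_const n).aestronglyMeasurable
  · filter_upwards [hμ] with x hx
    rw [Real.norm_eq_abs, abs_of_nonneg (pow_nonneg hx.1 _)]
    exact pow_le_pow_left₀ hx.1 hx.2 n

lemma aux_mom_bound (hμ : ∀ᵐ x ∂μ, x ∈ Set.Icc 0 M) (n : ℕ) :
    |∫ x, x ^ n ∂μ| ≤ M ^ n := by
  have h := aux_int_pow hμ n
  calc |∫ x, x ^ n ∂μ| ≤ ∫ x, |x ^ n| ∂μ := by
        simpa [Real.norm_eq_abs] using norm_integral_le_integral_norm (fun x : ℝ => x ^ n) (μ := μ)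
  _ ≤ ∫ _, M ^ n ∂μ := by
        refine integral_mono_ae h.abs (integrable_const _) ?_
        filter_upwards [hμ] with x hx
        rw [abs_of_nonneg (pow_nonneg hx.1 _)]
        exact pow_le_pow_left₀ hx.1 hx.2 n
  _ = M ^ n := by simp

lemma aux_int_pmf (hμ : ∀ᵐ x ∂μ, x ∈ Set.Icc 0 M) (j : ℕ) :
    Integrable (fun x => poissonPMF x j) μ := by
  refine (integrable_const (M ^ j / (j ! : ℝ))).mono' ?_ ?_
  · apply Continuous.aestronglyMeasurable
    unfold poissonPMF
    exact ((Real.continuous_exp.comp continuous_neg).mul (continuous_pow j)).div_const _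
  · filter_upwards [hμ] with x hx
    rw [Real.norm_eq_abs, abs_of_nonneg (poissonPMF_nonneg hx.1 j)]
    exact poissonPMF_le hx j

lemma aux_pmf_int_nonneg (hμ : ∀ᵐ x ∂μ, x ∈ Set.Icc 0 M) (j : ℕ) :
    0 ≤ ∫ x, poissonPMF x j ∂μ := by
  refine integral_nonneg_of_ae ?_
  filter_upwards [hμ] with x hx
  exact poissonPMF_nonneg hx.1 j

lemma aux_pmf_int_le (hμ : ∀ᵐ x ∂μ, x ∈ Set.Icc 0 M) (j : ℕ) :
    ∫ x, poissonPMF x j ∂μ ≤ M ^ j / (j ! : ℝ) := by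
  calc ∫ x, poissonPMF x j ∂μ ≤ ∫ _, M ^ j / (j ! : ℝ) ∂μ := by
        refine integral_mono_ae (aux_int_pmf hμ j) (integrable_const _) ?_
        filter_upwards [hμ] with x hx
        exact poissonPMF_le hx j
  _ = M ^ j / (j ! : ℝ) := by simp

lemma aux_summable_p (hμ : ∀ᵐ x ∂μ, x ∈ Set.Icc 0 M) :
    Summable (fun j => ∫ x, poissonPMF x j ∂μ) :=
  Summable.of_nonneg_of_le (aux_pmf_int_nonneg hμ) (aux_pmf_int_le hμ)
    (Real.summable_pow_div_factorial M)

lemma aux_rep (hM : 0 ≤ M) (hμ : ∀ᵐ x ∂μ, x ∈ Set.Icc 0 M) (j : ℕ) :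
    ∫ x, poissonPMF x j ∂μ
      = ∑' k : ℕ, ((-1 : ℝ) ^ k / ((j)! * (k)!)) * ∫ x, x ^ (j + k) ∂μ := by
  set F : ℕ → ℝ → ℝ := fun k x => ((-1 : ℝ) ^ k / ((j)! * (k)!)) * x ^ (j + k) with hF
  have hFint : ∀ k : ℕ, Integrable (F k) μ := fun k => (aux_int_pow hμ (j + k)).const_mul _
  have habs : ∀ k : ℕ, ∀ x ∈ Set.Icc (0:ℝ) M,
      ‖F k x‖ ≤ (M ^ j / (j ! : ℝ)) * (M ^ k / (k ! : ℝ)) := by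
    intro k x hx
    have h1 : ‖F k x‖ = x ^ (j + k) / ((j)! * (k)! : ℝ) := by
      rw [hF]
      rw [norm_mul, norm_div, norm_pow, norm_neg, norm_one, one_pow, norm_pow,
        Real.norm_eq_abs, Real.norm_eq_abs, abs_of_nonneg hx.1,
        abs_of_nonneg (by positivity : (0:ℝ) ≤ ((j)! * (k)! : ℝ))]
      ring
    rw [h1, pow_add]
    have h2 : x ^ j * x ^ k ≤ M ^ j * M ^ k :=
      mul_le_mul (pow_le_pow_left₀ hx.1 hx.2 j) (pow_le_pow_left₀ hx.1 hx.2 k)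
        (pow_nonneg hx.1 k) (pow_nonneg (hx.1.trans hx.2) j)
    have h3 : (0:ℝ) < ((j)! * (k)! : ℝ) := by positivity
    rw [div_le_iff₀ h3]
    calc x ^ j * x ^ k ≤ M ^ j * M ^ k := h2
    _ = (M ^ j / (j ! : ℝ)) * (M ^ k / (k ! : ℝ)) * ((j)! * (k)! : ℝ) := by
        field_simp
  have hIbound : ∀ k : ℕ, ∫ x, ‖F k x‖ ∂μ ≤ (M ^ j / (j ! : ℝ)) * (M ^ k / (k ! : ℝ)) := by
    intro k
    calc ∫ x, ‖F k x‖ ∂μ ≤ ∫ _, (M ^ j / (j ! : ℝ)) * (M ^ k / (k ! : ℝ)) ∂μ := by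
          refine integral_mono_ae (hFint k).norm (integrable_const _) ?_
          filter_upwards [hμ] with x hx
          exact habs k x hx
    _ = _ := by simp
  have hsumnorm : Summable fun k => ∫ x, ‖F k x‖ ∂μ :=
    Summable.of_nonneg_of_le (fun k => integral_nonneg fun x => norm_nonneg _) hIbound
      ((Real.summable_pow_div_factorial M).mul_left _)
  have key := integral_tsum_of_summable_integral_norm hFint hsumnorm
  have hpt : ∀ x : ℝ, poissonPMF x j = ∑' k : ℕ, F k x := by
    intro x
    have hterm : ∀ k : ℕ, F k x = (x ^ j / (j ! : ℝ)) * ((-x) ^ k / (k ! : ℝ)) := by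
      intro k
      simp only [hF]
      have h1 : ((j)! : ℝ) ≠ 0 := by positivity
      have h2 : ((k)! : ℝ) ≠ 0 := by positivity
      rw [pow_add, neg_pow]
      field_simp
      ring
    rw [tsum_congr hterm, tsum_mul_left, ← real_exp_eq_tsum (-x)]
    unfold poissonPMF
    ring
  have : ∫ x, poissonPMF x j ∂μ = ∫ x, ∑' k : ℕ, F k x ∂μ :=
    integral_congr_ae (Filter.Eventually.of_forall fun x => hpt x)
  rw [this, ← key]
  refine tsum_congr fun k => ?_
  simp only [hF]
  exact integral_const_mul _ _

lemma aux_sum_one (hμ : ∀ᵐ x ∂μ, x ∈ Set.Icc 0 M) :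
    ∑' j : ℕ, ∫ x, poissonPMF x j ∂μ = 1 := by
  have hIbound : ∀ j : ℕ, ∫ x, ‖poissonPMF x j‖ ∂μ ≤ M ^ j / (j ! : ℝ) := by
    intro j
    calc ∫ x, ‖poissonPMF x j‖ ∂μ ≤ ∫ _, M ^ j / (j ! : ℝ) ∂μ := by
          refine integral_mono_ae (aux_int_pmf hμ j).norm (integrable_const _) ?_
          filter_upwards [hμ] with x hx
          rw [Real.norm_eq_abs, abs_of_nonneg (poissonPMF_nonneg hx.1 j)]
          exact poissonPMF_le hx j
    _ = _ := by simp
  have hsumnorm : Summable fun j => ∫ x, ‖poissonPMF x j‖ ∂μ :=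
    Summable.of_nonneg_of_le (fun k => integral_nonneg fun x => norm_nonneg _) hIbound
      (Real.summable_pow_div_factorial M)
  have key := integral_tsum_of_summable_integral_norm (fun j => aux_int_pmf hμ j) hsumnorm
  rw [key]
  have hpt : ∀ x : ℝ, ∑' j : ℕ, poissonPMF x j = 1 := by
    intro x
    have hterm : ∀ j : ℕ, poissonPMF x j = Real.exp (-x) * (x ^ j / (j ! : ℝ)) := by
      intro j; unfold poissonPMF; ring
    rw [tsum_congr hterm, tsum_mul_left, ← real_exp_eq_tsum x, ← Real.exp_add]
    simp
  calc ∫ x, ∑' j : ℕ, poissonPMF x j ∂μ = ∫ _, (1:ℝ) ∂μ :=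
        integral_congr_ae (Filter.Eventually.of_forall hpt)
  _ = 1 := by simp

end MeasAux

set_option maxHeartbeats 1600000

/-- total variation bound between Poisson mixtures via moment matching. -/
theorem tv_poisson_mixtures_moment_matching
    (M : ℝ) (L : ℕ) (hM : 0 < M) (hL : 2 * Real.exp 1 * M < (L : ℝ))
    (μ μ' : Measure ℝ) [IsProbabilityMeasure μ] [IsProbabilityMeasure μ']
    (hμ : ∀ᵐ x ∂μ, x ∈ Set.Icc 0 M) (hμ' : ∀ᵐ x ∂μ', x ∈ Set.Icc 0 M)
    (hmom : ∀ j : ℕ, 1 ≤ j → j ≤ L → ∫ x, x ^ j ∂μ = ∫ x, x ^ j ∂μ') :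
    TVpmf (fun j => ∫ x, poissonPMF x j ∂μ) (fun j => ∫ x, poissonPMF x j ∂μ')
      ≤ (2 * Real.exp 1 * M / L) ^ L := by
  classical
  have he1 : (2:ℝ) ≤ Real.exp 1 := by have := Real.add_one_le_exp 1; linarith
  set c : ℝ := 2 * Real.exp 1 * M with hc_def
  have hc_pos : 0 < c := by positivity
  clear_value c
  have hLpos : 0 < (L:ℝ) := lt_trans hc_pos hL
  have hL1 : 1 ≤ L := Nat.cast_pos.mp hLpos
  set p : ℕ → ℝ := fun j => ∫ x, poissonPMF x j ∂μ with hp_def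
  set q : ℕ → ℝ := fun j => ∫ x, poissonPMF x j ∂μ' with hq_def
  set m : ℕ → ℝ := fun n => ∫ x, x ^ n ∂μ with hm_def
  set m' : ℕ → ℝ := fun n => ∫ x, x ^ n ∂μ' with hm'_def
  clear_value p q m m'
  have hmom0 : ∀ n, n ≤ L → m n = m' n := by
    intro n hn
    rcases Nat.eq_zero_or_pos n with h0 | h1
    · subst h0; simp [hm_def, hm'_def]
    · simp only [hm_def, hm'_def]
      exact hmom n h1 hn
  have hmb : ∀ n, |m n| ≤ M ^ n := by
    intro n; simp only [hm_def]; exact aux_mom_bound hμ n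
  have hmb' : ∀ n, |m' n| ≤ M ^ n := by
    intro n; simp only [hm'_def]; exact aux_mom_bound hμ' n
  -- the dominating double array
  set b : ℕ → ℕ → ℝ :=
    fun j k => if L + 1 ≤ j + k then 2 * M ^ (j + k) / ((j)! * (k)!) else 0 with hb_def
  clear_value b
  have hb_nonneg : ∀ j k, 0 ≤ b j k := by
    intro j k; rw [hb_def]; dsimp only; split
    · positivity
    · exact le_rfl
  have hb_le : ∀ j k, b j k ≤ (2 * (M ^ j / (j ! : ℝ))) * (M ^ k / (k ! : ℝ)) := by
    intro j k; rw [hb_def]; dsimp only; split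
    · apply le_of_eq
      rw [pow_add]
      field_simp
    · positivity
  have hsum2 : Summable (fun k : ℕ => M ^ k / (k ! : ℝ)) := Real.summable_pow_div_factorial M
  have hBsummable : Summable (fun pr : ℕ × ℕ => b pr.1 pr.2) := by
    refine Summable.of_nonneg_of_le (fun pr => hb_nonneg _ _) (fun pr => hb_le _ _) ?_
    exact Summable.mul_of_nonneg (hsum2.mul_left 2) hsum2
      (fun j => by positivity) (fun k => by positivity)
  have hbrow : ∀ j, Summable (fun k => b j k) := fun j => hBsummable.prod_factor j
  -- step 1: the coefficient representation and termwise bound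
  have hcoefsum : ∀ (f : ℕ → ℝ), (∀ n, |f n| ≤ M ^ n) → ∀ j : ℕ,
      Summable (fun k : ℕ => ((-1 : ℝ) ^ k / ((j)! * (k)!)) * f (j + k)) := by
    intro f hf j
    refine Summable.of_norm (Summable.of_nonneg_of_le (fun k => norm_nonneg _) ?_
      ((Real.summable_pow_div_factorial M).mul_left (M ^ j / (j ! : ℝ))))
    intro k
    rw [Real.norm_eq_abs, abs_mul, abs_div, abs_pow, abs_neg, abs_one, one_pow,
      abs_of_nonneg (by positivity : (0:ℝ) ≤ ((j)! * (k)! : ℝ))]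
    calc 1 / ((j)! * (k)! : ℝ) * |f (j + k)| ≤ 1 / ((j)! * (k)! : ℝ) * M ^ (j + k) := by
          refine mul_le_mul_of_nonneg_left (hf _) (by positivity)
    _ = M ^ j / (j ! : ℝ) * (M ^ k / (k ! : ℝ)) := by
          rw [pow_add]
          field_simp
  have hd_rep : ∀ j, p j - q j
      = ∑' k : ℕ, ((-1 : ℝ) ^ k / ((j)! * (k)!)) * (m (j + k) - m' (j + k)) := by
    intro j
    have h1 := hcoefsum m hmb j
    have h2 := hcoefsum m' hmb' j
    simp only [hm_def] at h1
    simp only [hm'_def] at h2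
    rw [hp_def, hq_def]
    dsimp only
    rw [aux_rep hM.le hμ j, aux_rep hM.le hμ' j, ← Summable.tsum_sub h1 h2]
    refine tsum_congr fun k => ?_
    simp only [hm_def, hm'_def]
    ring
  have habsk : ∀ j k, |((-1 : ℝ) ^ k / ((j)! * (k)!)) * (m (j + k) - m' (j + k))| ≤ b j k := by
    intro j k
    by_cases hk : L + 1 ≤ j + k
    · rw [hb_def]; dsimp only; rw [if_pos hk]
      rw [abs_mul, abs_div, abs_pow, abs_neg, abs_one, one_pow,
        abs_of_nonneg (by positivity : (0:ℝ) ≤ ((j)! * (k)! : ℝ))]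
      have h1 : |m (j + k) - m' (j + k)| ≤ 2 * M ^ (j + k) := by
        calc |m (j + k) - m' (j + k)| ≤ |m (j + k)| + |m' (j + k)| := abs_sub _ _
        _ ≤ M ^ (j + k) + M ^ (j + k) := add_le_add (hmb _) (hmb' _)
        _ = 2 * M ^ (j + k) := by ring
      calc 1 / ((j)! * (k)! : ℝ) * |m (j + k) - m' (j + k)|
          ≤ 1 / ((j)! * (k)! : ℝ) * (2 * M ^ (j + k)) :=
            mul_le_mul_of_nonneg_left h1 (by positivity)
      _ = 2 * M ^ (j + k) / ((j)! * (k)!) := by ring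
    · have hjk : j + k ≤ L := by omega
      have : m (j + k) = m' (j + k) := hmom0 _ hjk
      rw [hb_def]; dsimp only; rw [if_neg hk, this]
      simp
  have hstep1 : ∀ j, |p j - q j| ≤ ∑' k, b j k := by
    intro j
    have hsabs : Summable (fun k : ℕ =>
        |((-1 : ℝ) ^ k / ((j)! * (k)!)) * (m (j + k) - m' (j + k))|) :=
      Summable.of_nonneg_of_le (fun k => abs_nonneg _) (habsk j) (hbrow j)
    rw [hd_rep j]
    calc |∑' k : ℕ, ((-1 : ℝ) ^ k / ((j)! * (k)!)) * (m (j + k) - m' (j + k))|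
        ≤ ∑' k : ℕ, |((-1 : ℝ) ^ k / ((j)! * (k)!)) * (m (j + k) - m' (j + k))| := by
          have := norm_tsum_le_tsum_norm
            (f := fun k : ℕ => ((-1 : ℝ) ^ k / ((j)! * (k)!)) * (m (j + k) - m' (j + k)))
            (by simp only [Real.norm_eq_abs]; exact hsabs)
          simp only [Real.norm_eq_abs] at this
          exact this
    _ ≤ ∑' k, b j k := Summable.tsum_le_tsum (habsk j) hsabs (hbrow j)
  -- the fiberwise sum
  have hFhasSum : HasSum (fun j => ∑' k, b j k) (∑' pr : ℕ × ℕ, b pr.1 pr.2) :=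
    HasSum.prod_fiberwise hBsummable.hasSum (fun j => (hbrow j).hasSum)
  -- collapse the double sum along antidiagonals
  set T : ℕ → ℝ := fun n => if L + 1 ≤ n then 2 * ((2 * M) ^ n / (n ! : ℝ)) else 0 with hT_def
  clear_value T
  have hBT : ∑' pr : ℕ × ℕ, b pr.1 pr.2 = ∑' n, T n := by
    have hfin : ∀ n : ℕ, ∑ x ∈ Finset.HasAntidiagonal.antidiagonal n, b x.1 x.2 = T n := by
      intro n
      by_cases hn : L + 1 ≤ n
      · have hterm : ∀ x ∈ Finset.HasAntidiagonal.antidiagonal n,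
            b x.1 x.2 = 2 * (M ^ n / ((x.1)! * (x.2)! : ℝ)) := by
          intro x hx
          have hxn : x.1 + x.2 = n := Finset.HasAntidiagonal.mem_antidiagonal.mp hx
          rw [hb_def]; dsimp only; rw [hxn, if_pos hn]
          ring
        rw [Finset.sum_congr rfl hterm, ← Finset.mul_sum, antidiag_factorial_sum, hT_def]
        dsimp only
        rw [if_pos hn]
      · have hterm : ∀ x ∈ Finset.HasAntidiagonal.antidiagonal n, b x.1 x.2 = 0 := by
          intro x hx
          have hxn : x.1 + x.2 = n := Finset.HasAntidiagonal.mem_antidiagonal.mp hx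
          rw [hb_def]; dsimp only; rw [hxn, if_neg hn]
        rw [Finset.sum_congr rfl hterm, Finset.sum_const, smul_zero, hT_def]
        dsimp only
        rw [if_neg hn]
    have hsig : Summable (fun x : (Σ n : ℕ, (Finset.HasAntidiagonal.antidiagonal n : Finset (ℕ × ℕ))) =>
        b ((Finset.HasAntidiagonal.sigmaAntidiagonalEquivProd x : ℕ × ℕ)).1
          ((Finset.HasAntidiagonal.sigmaAntidiagonalEquivProd x : ℕ × ℕ)).2) :=
      Finset.HasAntidiagonal.sigmaAntidiagonalEquivProd.summable_iff.mpr hBsummable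
    have he : ∑' x : (Σ n : ℕ, (Finset.HasAntidiagonal.antidiagonal n : Finset (ℕ × ℕ))),
        b ((Finset.HasAntidiagonal.sigmaAntidiagonalEquivProd x : ℕ × ℕ)).1
          ((Finset.HasAntidiagonal.sigmaAntidiagonalEquivProd x : ℕ × ℕ)).2
        = ∑' pr : ℕ × ℕ, b pr.1 pr.2 :=
      Finset.HasAntidiagonal.sigmaAntidiagonalEquivProd.tsum_eq (fun pr : ℕ × ℕ => b pr.1 pr.2)
    rw [← he, Summable.tsum_sigma hsig]
    refine tsum_congr fun n => ?_
    simp only [Finset.HasAntidiagonal.sigmaAntidiagonalEquivProd_apply]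
    have hsub : ∑' (x : (Finset.HasAntidiagonal.antidiagonal n : Finset (ℕ × ℕ))),
        b (x : ℕ × ℕ).1 (x : ℕ × ℕ).2 = ∑ x ∈ Finset.HasAntidiagonal.antidiagonal n, b x.1 x.2 :=
      Finset.tsum_subtype (Finset.HasAntidiagonal.antidiagonal n) (fun p : ℕ × ℕ => b p.1 p.2)
    exact hsub.trans (hfin n)
  -- bound the tail sum
  set D : ℝ := (2 * M) ^ (L + 1) / ((L + 1)! : ℝ) with hD_def
  clear_value D
  have hTsummable : Summable T := by
    refine Summable.of_nonneg_of_le (fun n => ?_) (fun n => ?_)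
      ((Real.summable_pow_div_factorial (2 * M)).mul_left 2)
    · rw [hT_def]; dsimp only; split
      · positivity
      · exact le_rfl
    · rw [hT_def]; dsimp only; split
      · exact le_rfl
      · positivity
  have h4M : 4 * M ≤ (L:ℝ) := by nlinarith
  have hgeo : ∀ i : ℕ, (2 * M) ^ (i + (L + 1)) / (((i + (L + 1)))! : ℝ) ≤ D * (1/2) ^ i := by
    intro i
    induction i with
    | zero => simp [hD_def]
    | succ i ih =>
      have hfs : (((i + (L + 1)) + 1)! : ℝ) = ((i + (L + 1) : ℕ) + 1 : ℝ) * (((i + (L + 1)))! : ℝ) := by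
        rw [Nat.factorial_succ]; push_cast; ring
      have harith : (i + 1) + (L + 1) = (i + (L + 1)) + 1 := by omega
      rw [harith]
      have hfpos : (0:ℝ) < (((i + (L + 1)))! : ℝ) := by positivity
      have hnpos : (0:ℝ) < ((i + (L + 1) : ℕ) + 1 : ℝ) := by positivity
      have hsplit : (2 * M) ^ ((i + (L + 1)) + 1) / ((((i + (L + 1)) + 1))! : ℝ)
          = ((2 * M) ^ (i + (L + 1)) / (((i + (L + 1)))! : ℝ))
            * ((2 * M) / ((i + (L + 1) : ℕ) + 1 : ℝ)) := by
        rw [pow_succ, hfs]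
        field_simp
      rw [hsplit]
      have hhalf : (2 * M) / ((i + (L + 1) : ℕ) + 1 : ℝ) ≤ 1 / 2 := by
        rw [div_le_div_iff₀ hnpos (by norm_num)]
        have : (L : ℝ) ≤ ((i + (L + 1) : ℕ) : ℝ) := by
          push_cast; linarith [Nat.cast_nonneg (α := ℝ) i]
        nlinarith
      have hnn : (0:ℝ) ≤ (2 * M) ^ (i + (L + 1)) / (((i + (L + 1)))! : ℝ) := by positivity
      calc ((2 * M) ^ (i + (L + 1)) / (((i + (L + 1)))! : ℝ))
            * ((2 * M) / ((i + (L + 1) : ℕ) + 1 : ℝ))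
          ≤ (D * (1/2) ^ i) * (1/2) := by
            refine mul_le_mul ih hhalf (by positivity) ?_
            have : (0:ℝ) ≤ D := by rw [hD_def]; positivity
            positivity
      _ = D * (1/2) ^ (i + 1) := by rw [pow_succ]; ring
  have hTtail : ∑' n, T n ≤ 4 * D := by
    have hsplit := Summable.sum_add_tsum_nat_add (L + 1) hTsummable
    have hzero : ∑ i ∈ Finset.range (L + 1), T i = 0 := by
      refine Finset.sum_eq_zero fun i hi => ?_
      have : ¬ (L + 1 ≤ i) := by
        have := Finset.mem_range.mp hi; omega
      rw [hT_def]; dsimp only; rw [if_neg this]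
    have htail : ∀ i : ℕ, T (i + (L + 1)) ≤ (2 * D) * (1/2) ^ i := by
      intro i
      rw [hT_def]; dsimp only
      rw [if_pos (by omega : L + 1 ≤ i + (L + 1))]
      have := hgeo i
      nlinarith [this]
    have hsum_tail : ∑' i : ℕ, T (i + (L + 1)) ≤ (2 * D) * 2 := by
      calc ∑' i : ℕ, T (i + (L + 1)) ≤ ∑' i : ℕ, (2 * D) * (1/2) ^ i :=
            Summable.tsum_le_tsum htail ((summable_nat_add_iff (L + 1)).mpr hTsummable)
              ((summable_geometric_two).mul_left _)
      _ = (2 * D) * ∑' i : ℕ, ((1:ℝ)/2) ^ i := tsum_mul_left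
      _ = (2 * D) * 2 := by rw [tsum_geometric_two]
    have : ∑' n, T n = ∑' i : ℕ, T (i + (L + 1)) := by
      rw [← hsplit, hzero, zero_add]
    rw [this]; linarith
  -- relate TV to the ℓ¹ distance
  have hps : Summable p := by rw [hp_def]; exact aux_summable_p hμ
  have hqs : Summable q := by rw [hq_def]; exact aux_summable_p hμ'
  have hdsum : Summable (fun j => p j - q j) := hps.sub hqs
  have hdabs : Summable (fun j => |p j - q j|) := hdsum.abs
  have htotal : ∑' j, (p j - q j) = 0 := by
    rw [Summable.tsum_sub hps hqs, hp_def, hq_def]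
    dsimp only
    rw [aux_sum_one hμ, aux_sum_one hμ']
    ring
  have hhalf : ∀ A : Set ℕ, |(∑' j : A, p j) - (∑' j : A, q j)|
      ≤ (1/2) * ∑' j, |p j - q j| := by
    intro A
    have h1 : (∑' j : A, p j) - (∑' j : A, q j) = ∑' j : A, (p j - q j) :=
      (Summable.tsum_sub (hps.subtype A) (hqs.subtype A)).symm
    have h2 : (∑' j : A, (p j - q j)) + ∑' j : (Aᶜ : Set ℕ), (p j - q j)
        = ∑' j, (p j - q j) :=
      Summable.tsum_add_tsum_compl (hdsum.subtype A) (hdsum.subtype Aᶜ)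
    have h3 : |∑' j : A, (p j - q j)| ≤ ∑' j : A, |p j - q j| := by
      have := norm_tsum_le_tsum_norm (f := fun j : A => p j - q j)
          (by simp only [Real.norm_eq_abs]; exact hdabs.subtype A)
      simp only [Real.norm_eq_abs] at this
      exact this
    have h4 : |∑' j : (Aᶜ : Set ℕ), (p j - q j)| ≤ ∑' j : (Aᶜ : Set ℕ), |p j - q j| := by
      have := norm_tsum_le_tsum_norm (f := fun j : (Aᶜ : Set ℕ) => p j - q j)
          (by simp only [Real.norm_eq_abs]; exact hdabs.subtype Aᶜ)
      simp only [Real.norm_eq_abs] at this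
      exact this
    have h5 : (∑' j : A, |p j - q j|) + ∑' j : (Aᶜ : Set ℕ), |p j - q j|
        = ∑' j, |p j - q j| :=
      Summable.tsum_add_tsum_compl (hdabs.subtype A) (hdabs.subtype Aᶜ)
    have h6 : ∑' j : (Aᶜ : Set ℕ), (p j - q j) = - ∑' j : A, (p j - q j) := by
      rw [htotal] at h2; linarith
    rw [h1]
    have h7 : |∑' j : A, (p j - q j)| + |∑' j : A, (p j - q j)| ≤ ∑' j, |p j - q j| := by
      calc |∑' j : A, (p j - q j)| + |∑' j : A, (p j - q j)|
          = |∑' j : A, (p j - q j)| + |∑' j : (Aᶜ : Set ℕ), (p j - q j)| := by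
            rw [h6, abs_neg]
      _ ≤ (∑' j : A, |p j - q j|) + ∑' j : (Aᶜ : Set ℕ), |p j - q j| := add_le_add h3 h4
      _ = ∑' j, |p j - q j| := h5
    linarith
  have hTV : TVpmf p q ≤ (1/2) * ∑' j, |p j - q j| := by
    unfold TVpmf
    exact ciSup_le hhalf
  -- chain of bounds
  have hchain1 : ∑' j, |p j - q j| ≤ ∑' n, T n := by
    calc ∑' j, |p j - q j| ≤ ∑' j, ∑' k, b j k :=
          Summable.tsum_le_tsum hstep1 hdabs hFhasSum.summable
    _ = ∑' pr : ℕ × ℕ, b pr.1 pr.2 := hFhasSum.tsum_eq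
    _ = ∑' n, T n := hBT
  -- Stirling-type bound: D ≤ (c / (L+1)) ^ (L+1)
  have hstir : D ≤ (c / ((L:ℝ) + 1)) ^ (L + 1) := by
    have hN : (0:ℝ) < (L:ℝ) + 1 := by positivity
    have hNN : ((L:ℝ) + 1) ^ (L + 1) ≤ (((L + 1))! : ℝ) * Real.exp 1 ^ (L + 1) := by
      have h1 := Real.pow_div_factorial_le_exp (((L + 1 : ℕ)) : ℝ) (by positivity) (L + 1)
      rw [div_le_iff₀ (by positivity : (0:ℝ) < (((L + 1))! : ℝ))] at h1
      have h2 : Real.exp ((L + 1 : ℕ) : ℝ) = Real.exp 1 ^ (L + 1) := by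
        rw [← Real.exp_nat_mul, mul_one]
      rw [h2] at h1
      push_cast at h1 ⊢
      nlinarith [h1]
    have hfpos : (0:ℝ) < (((L + 1))! : ℝ) := by positivity
    have hcLN : (c / ((L:ℝ) + 1)) ^ (L + 1)
        = (2 * M) ^ (L + 1) * Real.exp 1 ^ (L + 1) / ((L:ℝ) + 1) ^ (L + 1) := by
      rw [div_pow, hc_def]
      rw [show (2 * Real.exp 1 * M) ^ (L + 1) = (2 * M) ^ (L + 1) * Real.exp 1 ^ (L + 1) by
        rw [← mul_pow]; ring_nf]
    rw [hD_def, hcLN, div_le_div_iff₀ hfpos (by positivity)]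
    calc (2 * M) ^ (L + 1) * ((L:ℝ) + 1) ^ (L + 1)
        ≤ (2 * M) ^ (L + 1) * ((((L + 1))! : ℝ) * Real.exp 1 ^ (L + 1)) :=
          mul_le_mul_of_nonneg_left hNN (by positivity)
    _ = (2 * M) ^ (L + 1) * Real.exp 1 ^ (L + 1) * (((L + 1))! : ℝ) := by ring
  -- final combinatorial inequality
  have hfinal : 4 * ((c / ((L:ℝ) + 1)) ^ (L + 1)) ≤ 2 * (c / (L:ℝ)) ^ L := by
    have hLn0 : (L:ℝ) ≠ 0 := ne_of_gt hLpos
    have hL1n0 : (L:ℝ) + 1 ≠ 0 := by positivity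
    have hpow2 : ((L:ℝ) / ((L:ℝ) + 1)) ^ L ≤ 1 / 2 := by
      have hb1 : (-2:ℝ) ≤ 1 / (L:ℝ) := by
        have : (0:ℝ) ≤ 1 / (L:ℝ) := by positivity
        linarith
      have hber := one_add_mul_le_pow hb1 L
      have h2' : (1:ℝ) + (L:ℝ) * (1 / (L:ℝ)) = 2 := by
        rw [mul_one_div, div_self hLn0]; norm_num
      have heq : ((L:ℝ) + 1) / (L:ℝ) = 1 + 1 / (L:ℝ) := by
        rw [add_div, div_self hLn0]
      have h2 : (2:ℝ) ≤ (((L:ℝ) + 1) / (L:ℝ)) ^ L := by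
        rw [heq]; linarith
      have hmul : ((L:ℝ) / ((L:ℝ) + 1)) ^ L * (((L:ℝ) + 1) / (L:ℝ)) ^ L = 1 := by
        rw [← mul_pow, show (L:ℝ) / ((L:ℝ) + 1) * (((L:ℝ) + 1) / (L:ℝ)) = 1 by
          field_simp]
        exact one_pow L
      have hx0 : (0:ℝ) ≤ ((L:ℝ) / ((L:ℝ) + 1)) ^ L :=
        pow_nonneg (by positivity) L
      nlinarith [mul_le_mul_of_nonneg_left h2 hx0]
    have hsplitpow : (c / ((L:ℝ) + 1)) ^ (L + 1)
        = (c / ((L:ℝ) + 1)) * ((c / (L:ℝ)) ^ L * ((L:ℝ) / ((L:ℝ) + 1)) ^ L) := by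
      rw [pow_succ]
      rw [show (c / ((L:ℝ) + 1)) ^ L = (c / (L:ℝ)) ^ L * ((L:ℝ) / ((L:ℝ) + 1)) ^ L by
        rw [← mul_pow]; congr 1; field_simp]
      ring
    have hu1 : c / ((L:ℝ) + 1) ≤ 1 := by
      rw [div_le_one (by positivity)]; linarith
    have hu0 : 0 ≤ c / ((L:ℝ) + 1) := by positivity
    have hv0 : 0 ≤ (c / (L:ℝ)) ^ L := by positivity
    have hw0 : 0 ≤ ((L:ℝ) / ((L:ℝ) + 1)) ^ L := by positivity
    rw [hsplitpow]
    nlinarith [mul_le_mul_of_nonneg_left hpow2 hv0]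
  -- put everything together
  have hgoal : TVpmf p q ≤ (c / (L:ℝ)) ^ L := by
    calc TVpmf p q ≤ (1/2) * ∑' j, |p j - q j| := hTV
    _ ≤ (1/2) * ∑' n, T n := by linarith [hchain1]
    _ ≤ (1/2) * (4 * D) := by linarith [hTtail]
    _ = 2 * D := by ring
    _ ≤ 2 * (c / ((L:ℝ) + 1)) ^ (L + 1) := by linarith [hstir]
    _ ≤ (c / (L:ℝ)) ^ L := by linarith [hfinal]
  exact hgoal
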